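/- (Binet formula for odd indices) Let α = (ab + √(a²b² + 8ab))/2 and β = (ab − √(a²b² + 8ab))/2 where a, b > 0. Then for every n ≥ 0, j_{2n+1} = (1/(ab)^n)·(α^{2n+1} − β^{2n+1})/(α − β). -/

import Mathlib

noncomputable def jj (a b : ℝ) : ℕ → ℝ
  | 0 => 0
  | 1 => 1
  | n + 2 => (if Even (n + 2) then a else b) * jj a b (n + 1) + 2 * jj a b n

lemma jj_rec (a b : ℝ) (n : ℕ) :
    jj a b (2*n+5) = (a*b+4) * jj a b (2*n+3) - 4 * jj a b (2*n+1) := by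
  have h5 : jj a b (2*n+5) = b * jj a b (2*n+4) + 2 * jj a b (2*n+3) := by
    show jj a b ((2*n+3)+2) = _
    rw [jj]; simp [Nat.even_add_one, parity_simps]
  have h4 : jj a b (2*n+4) = a * jj a b (2*n+3) + 2 * jj a b (2*n+2) := by
    show jj a b ((2*n+2)+2) = _
    rw [jj]; simp [Nat.even_add_one, parity_simps]
  have h3 : jj a b (2*n+3) = b * jj a b (2*n+2) + 2 * jj a b (2*n+1) := by
    show jj a b ((2*n+1)+2) = _
    rw [jj]; simp [Nat.even_add_one, parity_simps]
  linear_combination h5 + b*h4 - 2*h3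

lemma pow_rec (a b x : ℝ) (hx : x^2 = a*b*x + 2*(a*b)) (m : ℕ) :
    x^(2*m+5) = (a*b)*(a*b+4)*x^(2*m+3) - 4*(a*b)^2*x^(2*m+1) := by
  have h4 : x^4 = (a*b)*(a*b+4)*x^2 - 4*(a*b)^2 := by
    linear_combination (x^2 + a*b*x - 2*(a*b)) * hx
  calc x^(2*m+5) = x^(2*m+1) * x^4 := by ring
    _ = x^(2*m+1) * ((a*b)*(a*b+4)*x^2 - 4*(a*b)^2) := by rw [h4]
    _ = _ := by ring

theorem stmt8 (a b : ℝ) (ha : 0 < a) (hb : 0 < b) (n : ℕ)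
    (α β : ℝ)
    (hα : α = (a * b + Real.sqrt (a ^ 2 * b ^ 2 + 8 * a * b)) / 2)
    (hβ : β = (a * b - Real.sqrt (a ^ 2 * b ^ 2 + 8 * a * b)) / 2) :
    jj a b (2 * n + 1) = 1 / (a * b) ^ n * ((α ^ (2 * n + 1) - β ^ (2 * n + 1)) / (α - β)) := by
  have hab : (0:ℝ) < a * b := mul_pos ha hb
  have hs2 : Real.sqrt (a ^ 2 * b ^ 2 + 8 * a * b) ^ 2 = a ^ 2 * b ^ 2 + 8 * a * b := by
    rw [Real.sq_sqrt]; positivity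
  have hspos : 0 < Real.sqrt (a ^ 2 * b ^ 2 + 8 * a * b) := Real.sqrt_pos.mpr (by positivity)
  have hdiff : α - β ≠ 0 := by rw [hα, hβ]; intro h; nlinarith
  have hsum : α + β = a * b := by rw [hα, hβ]; ring
  have hα2 : α^2 = a*b*α + 2*(a*b) := by rw [hα]; linear_combination (1/4) * hs2
  have hβ2 : β^2 = a*b*β + 2*(a*b) := by rw [hβ]; linear_combination (1/4) * hs2
  have habne : (a*b) ≠ 0 := ne_of_gt hab
  induction n using Nat.twoStepInduction with
  | zero =>
    simp [jj]
    field_simp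
  | one =>
    have hj3 : jj a b 3 = a*b + 2 := by
      show jj a b (1+2) = _
      rw [jj]
      norm_num [jj, Nat.even_iff]
      ring
    have h3 : α^3 - β^3 = (a*b*(a*b) + 2*(a*b))*(α - β) := by
      linear_combination α*hα2 - β*hβ2 + a*b*(α-β)*hsum
    show jj a b 3 = 1/(a*b)^1 * ((α^3 - β^3)/(α - β))
    rw [hj3, h3]
    field_simp
  | more m ih1 ih2 =>
    have hrec : jj a b (2*m+5) = (a*b+4) * jj a b (2*m+3) - 4 * jj a b (2*m+1) :=
      jj_rec a b m
    have e1 : 2*(m+1)+1 = 2*m+3 := by ring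
    have e2 : 2*(m+2)+1 = 2*m+5 := by ring
    rw [e2, hrec]
    rw [e1] at ih2
    rw [ih1, ih2, pow_rec a b α hα2 m, pow_rec a b β hβ2 m]
    field_simp
    ring
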